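/- Let q be a probability distribution on a finite index set [N], and let {|ψ_j⟩}_{j∈[N]} be vectors in ℂ^d with ‖|ψ_j⟩‖² ≤ m for all j. Let |μ⟩ = Σ_j q_j |ψ_j⟩ and p = ‖|μ⟩‖². If x₁, …, x_s are sampled i.i.d. from q and |ψ̄⟩ = (1/s) Σ_{j=1}^s |ψ_{x_j}⟩, then for all ε > 0, Pr(‖ |ψ̄⟩⟨ψ̄| - |μ⟩⟨μ| ‖₁ ≥ ε) ≤ 2e² · exp( -s(√(p+ε) - √p)² / (2(√m + √p)²) ), where ‖·‖₁ is the Schatten 1-norm. -/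

import Mathlib

open MeasureTheory Matrix ComplexConjugate

/-- The Schatten 1-norm (trace norm) of a complex square matrix:
the sum of its singular values, i.e. of the square roots of the eigenvalues of `Aᴴ * A`. -/
noncomputable def schattenOneNorm {d : ℕ} (A : Matrix (Fin d) (Fin d) ℂ) : ℝ :=
  ∑ i, Real.sqrt ((Matrix.isHermitian_conjTranspose_mul_self A).eigenvalues i)

/-- The rank-one operator |v⟩⟨v| associated with a vector v. -/
noncomputable def rankOne {d : ℕ} (v : EuclideanSpace ℂ (Fin d)) : Matrix (Fin d) (Fin d) ℂ :=
  fun i j => v i * (starRingEnd ℂ) (v j)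

noncomputable def outerCD {d : ℕ} (u v : EuclideanSpace ℂ (Fin d)) : Matrix (Fin d) (Fin d) ℂ :=
  fun i j => u i * conj (v j)

lemma outerCD_mul_outerCD {d : ℕ} (u v w x : EuclideanSpace ℂ (Fin d)) :
    outerCD u v * outerCD w x = (∑ k, conj (v k) * w k) • outerCD u x := by
  ext i j
  simp only [Matrix.mul_apply, outerCD, Matrix.smul_apply, smul_eq_mul, Finset.sum_mul]
  exact Finset.sum_congr rfl fun k _ => by ring

lemma trace_outerCD {d : ℕ} (u v : EuclideanSpace ℂ (Fin d)) :
    Matrix.trace (outerCD u v) = ∑ i, conj (v i) * u i := by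
  simp only [Matrix.trace, Matrix.diag, outerCD]
  exact Finset.sum_congr rfl fun k _ => by ring

lemma rankOne_eq_outerCD {d : ℕ} (v : EuclideanSpace ℂ (Fin d)) : rankOne v = outerCD v v := rfl

section traces
variable {d : ℕ} (a b : EuclideanSpace ℂ (Fin d))

lemma trace_M2 :
    ((rankOne a - rankOne b) * (rankOne a - rankOne b)).trace
      = (∑ k, conj (a k) * a k)^2 + (∑ k, conj (b k) * b k)^2
        - (∑ k, conj (a k) * b k) * (∑ k, conj (b k) * a k)
        - (∑ k, conj (b k) * a k) * (∑ k, conj (a k) * b k) := by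
  simp only [rankOne_eq_outerCD, Matrix.sub_mul, Matrix.mul_sub, outerCD_mul_outerCD,
    Matrix.trace_sub, Matrix.trace_smul, trace_outerCD, smul_eq_mul]
  ring

lemma trace_M4 :
    (((rankOne a - rankOne b) * (rankOne a - rankOne b))
      * ((rankOne a - rankOne b) * (rankOne a - rankOne b))).trace
      = (∑ k, conj (a k) * a k)^4 + (∑ k, conj (b k) * b k)^4
        + 2 * ((∑ k, conj (a k) * b k) * (∑ k, conj (b k) * a k))^2
        + 4 * (∑ k, conj (a k) * a k) * (∑ k, conj (b k) * b k)
            * ((∑ k, conj (a k) * b k) * (∑ k, conj (b k) * a k))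
        - 4 * (∑ k, conj (a k) * a k)^2 * ((∑ k, conj (a k) * b k) * (∑ k, conj (b k) * a k))
        - 4 * (∑ k, conj (b k) * b k)^2 * ((∑ k, conj (a k) * b k) * (∑ k, conj (b k) * a k)) := by
  simp only [rankOne_eq_outerCD, Matrix.sub_mul, Matrix.mul_sub, outerCD_mul_outerCD,
    Matrix.smul_mul, Matrix.mul_smul, smul_smul,
    Matrix.trace_sub, Matrix.trace_smul, trace_outerCD, smul_eq_mul]
  ring

end traces
lemma trace_eq_sum_eigs {n : Type*} [Fintype n] [DecidableEq n] {A : Matrix n n ℂ}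
    (hA : A.IsHermitian) : A.trace = ∑ i, (hA.eigenvalues i : ℂ) := by
  have hV : star (hA.eigenvectorUnitary : Matrix n n ℂ) * (hA.eigenvectorUnitary : Matrix n n ℂ) = 1 :=
    Matrix.mem_unitaryGroup_iff'.mp hA.eigenvectorUnitary.2
  conv_lhs => rw [hA.spectral_theorem, Unitary.conjStarAlgAut_apply]
  rw [Matrix.trace_mul_cycle, hV, Matrix.one_mul, Matrix.trace_diagonal]
  simp

lemma trace_sq_eq_sum_eigs_sq {n : Type*} [Fintype n] [DecidableEq n] {A : Matrix n n ℂ}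
    (hA : A.IsHermitian) : (A * A).trace = ∑ i, ((hA.eigenvalues i : ℂ))^2 := by
  have hV : star (hA.eigenvectorUnitary : Matrix n n ℂ) * (hA.eigenvectorUnitary : Matrix n n ℂ) = 1 :=
    Matrix.mem_unitaryGroup_iff'.mp hA.eigenvectorUnitary.2
  set V : Matrix n n ℂ := (hA.eigenvectorUnitary : Matrix n n ℂ)
  set D : Matrix n n ℂ := Matrix.diagonal (RCLike.ofReal ∘ hA.eigenvalues)
  have hAA : A * A = V * (D * D) * star V := by
    conv_lhs => rw [hA.spectral_theorem, Unitary.conjStarAlgAut_apply]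
    calc V * D * star V * (V * D * star V)
        = V * D * (star V * V) * D * star V := by noncomm_ring [Matrix.mul_assoc]
      _ = V * (D * D) * star V := by rw [hV]; noncomm_ring [Matrix.mul_assoc]
  rw [hAA, Matrix.trace_mul_cycle, hV, Matrix.one_mul]
  rw [Matrix.diagonal_mul_diagonal, Matrix.trace_diagonal]
  simp [sq]
lemma rank_rankOne_sub_le {d : ℕ} (a b : EuclideanSpace ℂ (Fin d)) :
    (rankOne a - rankOne b).rank ≤ 2 := by
  classical
  set M := rankOne a - rankOne b
  have hsub : LinearMap.range M.mulVecLin ≤ Submodule.span ℂ {(a : Fin d → ℂ), (b : Fin d → ℂ)} := by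
    rintro _ ⟨x, rfl⟩
    have hx : M.mulVecLin x
        = (∑ j, conj (a j) * x j) • (a : Fin d → ℂ) - (∑ j, conj (b j) * x j) • (b : Fin d → ℂ) := by
      funext i
      simp only [Matrix.mulVecLin_apply, Matrix.mulVec, dotProduct, M, rankOne,
        Matrix.sub_apply]
      have hr : ((∑ j, conj (a j) * x j) • (a : Fin d → ℂ)
          - (∑ j, conj (b j) * x j) • (b : Fin d → ℂ)) i
          = (∑ j, conj (a j) * x j) * a i - (∑ j, conj (b j) * x j) * b i := rfl
      rw [hr, Finset.sum_mul, Finset.sum_mul, ← Finset.sum_sub_distrib]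
      exact Finset.sum_congr rfl fun k _ => by ring
    rw [hx]
    exact sub_mem
      (Submodule.smul_mem _ _ (Submodule.subset_span (by simp)))
      (Submodule.smul_mem _ _ (Submodule.subset_span (by simp)))
  calc M.rank ≤ Module.finrank ℂ (Submodule.span ℂ {(a : Fin d → ℂ), (b : Fin d → ℂ)}) :=
        Submodule.finrank_mono hsub
    _ ≤ 2 := by
        refine (finrank_span_le_card _).trans ?_
        simpa using Finset.card_insert_le (a : Fin d → ℂ) {(b : Fin d → ℂ)}

lemma sum_sqrt_le_of_card {d : ℕ} (ν : Fin d → ℝ) (h0 : ∀ i, 0 ≤ ν i)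
    (hcard : (Finset.univ.filter fun i => ν i ≠ 0).card ≤ 2) :
    ∑ i, Real.sqrt (ν i) ≤
      Real.sqrt (∑ i, ν i + Real.sqrt (2 * ((∑ i, ν i)^2 - ∑ i, (ν i)^2))) := by
  classical
  set S := Finset.univ.filter fun i => ν i ≠ 0 with hS
  have hz : ∀ k ∉ S, ν k = 0 := by
    intro k hk; by_contra h; exact hk (Finset.mem_filter.2 ⟨Finset.mem_univ _, h⟩)
  have h1 : ∑ i, Real.sqrt (ν i) = ∑ i ∈ S, Real.sqrt (ν i) :=
    (Finset.sum_subset (Finset.subset_univ S) (fun k _ hk => by rw [hz k hk, Real.sqrt_zero])).symm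
  have h2 : ∑ i, ν i = ∑ i ∈ S, ν i :=
    (Finset.sum_subset (Finset.subset_univ S) (fun k _ hk => hz k hk)).symm
  have h3 : ∑ i, (ν i)^2 = ∑ i ∈ S, (ν i)^2 :=
    (Finset.sum_subset (Finset.subset_univ S) (fun k _ hk => by rw [hz k hk]; ring)).symm
  rw [h1, h2, h3]
  interval_cases h : S.card
  · rw [Finset.card_eq_zero.mp h]
    simp
  · obtain ⟨i, hSe⟩ := Finset.card_eq_one.mp h
    rw [hSe]
    simp only [Finset.sum_singleton]
    have : (2 : ℝ) * ((ν i)^2 - (ν i)^2) = 0 := by ring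
    rw [this, Real.sqrt_zero, add_zero]
  · obtain ⟨i, j, hij, hSe⟩ := Finset.card_eq_two.mp h
    rw [hSe, Finset.sum_pair hij, Finset.sum_pair hij, Finset.sum_pair hij]
    have hin : (2:ℝ) * ((ν i + ν j)^2 - ((ν i)^2 + (ν j)^2)) = (2 * Real.sqrt (ν i) * Real.sqrt (ν j))^2 := by
      have := Real.sq_sqrt (h0 i); have := Real.sq_sqrt (h0 j)
      nlinarith [Real.sqrt_nonneg (ν i), Real.sqrt_nonneg (ν j)]
    rw [hin, Real.sqrt_sq (by positivity)]
    have : ν i + ν j + 2 * Real.sqrt (ν i) * Real.sqrt (ν j)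
        = (Real.sqrt (ν i) + Real.sqrt (ν j))^2 := by
      have := Real.sq_sqrt (h0 i); have := Real.sq_sqrt (h0 j)
      nlinarith
    rw [this, Real.sqrt_sq (by positivity)]

set_option maxHeartbeats 1000000 in
lemma traceNorm_key {d : ℕ} (a b : EuclideanSpace ℂ (Fin d)) :
    schattenOneNorm (rankOne a - rankOne b) ≤ ‖a - b‖ * (‖a‖ + ‖b‖) := by
  classical
  open ComplexOrder in
  set M := rankOne a - rankOne b with hMdef
  have hMH : Mᴴ = M := by
    ext i j
    simp only [hMdef, Matrix.conjTranspose_apply, Matrix.sub_apply, rankOne, star_sub, star_mul']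
    simp [mul_comm]
  have h0 : ∀ i, 0 ≤ (Matrix.isHermitian_conjTranspose_mul_self M).eigenvalues i :=
    fun i => Matrix.eigenvalues_conjTranspose_mul_self_nonneg M i
  have hcard : (Finset.univ.filter
      fun i => (Matrix.isHermitian_conjTranspose_mul_self M).eigenvalues i ≠ 0).card ≤ 2 := by
    have h1 := (Matrix.isHermitian_conjTranspose_mul_self M).rank_eq_card_non_zero_eigs
    rw [Matrix.rank_conjTranspose_mul_self] at h1
    have h2 := rank_rankOne_sub_le a b
    rw [← hMdef, h1, Fintype.card_subtype] at h2
    exact h2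
  have hbound := sum_sqrt_le_of_card _ h0 hcard
  set x := ‖a‖ with hx
  set y := ‖b‖ with hy
  have hip : ∀ (u v : EuclideanSpace ℂ (Fin d)),
      (∑ k, conj (u k) * v k) = (inner ℂ u v : ℂ) := fun u v => by
    simp [PiLp.inner_apply, RCLike.inner_apply, mul_comm]
  set c : ℂ := (inner ℂ a b : ℂ) with hcdef
  set n := ‖c‖ with hn
  have hsum_ab : (∑ k, conj (a k) * b k) = c := hip a b
  have hsum_ba : (∑ k, conj (b k) * a k) = conj c := by
    rw [hip b a, hcdef]; exact (inner_conj_symm b a).symm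
  have hsum_aa : (∑ k, conj (a k) * a k) = ((x^2 : ℝ) : ℂ) := by
    rw [hip a a, inner_self_eq_norm_sq_to_K]; push_cast; rfl
  have hsum_bb : (∑ k, conj (b k) * b k) = ((y^2 : ℝ) : ℂ) := by
    rw [hip b b, inner_self_eq_norm_sq_to_K]; push_cast; rfl
  have hmul : c * conj c = ((n^2 : ℝ) : ℂ) := by
    rw [RCLike.mul_conj]; push_cast; rfl
  have hA2 : (Mᴴ * M).trace = ((x^4 + y^4 - 2*n^2 : ℝ) : ℂ) := by
    rw [hMH]
    conv_lhs => rw [hMdef]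
    rw [trace_M2 a b, hsum_aa, hsum_bb, hsum_ab, hsum_ba, hmul]
    have : conj c * c = ((n^2 : ℝ) : ℂ) := by rw [mul_comm]; exact hmul
    rw [this]; push_cast; ring
  have hA4 : (Mᴴ * M * (Mᴴ * M)).trace
      = ((x^8 + y^8 + 2*n^4 + 4*x^2*y^2*n^2 - 4*x^4*n^2 - 4*y^4*n^2 : ℝ) : ℂ) := by
    rw [hMH]
    conv_lhs => rw [hMdef]
    rw [trace_M4 a b, hsum_aa, hsum_bb, hsum_ab, hsum_ba, hmul]
    push_cast; ring
  have e2 : ∑ i, (Matrix.isHermitian_conjTranspose_mul_self M).eigenvalues i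
      = x^4 + y^4 - 2*n^2 := by
    have h := trace_eq_sum_eigs (Matrix.isHermitian_conjTranspose_mul_self M)
    rw [hA2] at h
    exact_mod_cast h.symm
  have e4 : ∑ i, ((Matrix.isHermitian_conjTranspose_mul_self M).eigenvalues i)^2
      = x^8 + y^8 + 2*n^4 + 4*x^2*y^2*n^2 - 4*x^4*n^2 - 4*y^4*n^2 := by
    have h := trace_sq_eq_sum_eigs_sq (Matrix.isHermitian_conjTranspose_mul_self M)
    rw [hA4] at h
    exact_mod_cast h.symm
  have hnxy : n ≤ x * y := by
    rw [hn, hcdef, hx, hy]; exact norm_inner_le_norm a b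
  have hn0 : 0 ≤ n := norm_nonneg c
  have hx0 : 0 ≤ x := norm_nonneg a
  have hy0 : 0 ≤ y := norm_nonneg b
  have hδ : ‖a - b‖^2 = x^2 - 2*(RCLike.re c) + y^2 := by
    rw [@norm_sub_sq ℂ _ _ _ _ a b, ← hcdef, ← hx, ← hy]
  have hr : RCLike.re c ≤ n := hn ▸ RCLike.re_le_norm c
  have hLHS : schattenOneNorm M
      = ∑ i, Real.sqrt ((Matrix.isHermitian_conjTranspose_mul_self M).eigenvalues i) := rfl
  clear_value c
  clear_value x y n M
  rw [hLHS]
  refine hbound.trans ?_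
  rw [e2, e4]
  have hxyn : 0 ≤ x^2*y^2 - n^2 := by nlinarith
  have hinner : 2 * ((x^4 + y^4 - 2*n^2)^2
      - (x^8 + y^8 + 2*n^4 + 4*x^2*y^2*n^2 - 4*x^4*n^2 - 4*y^4*n^2))
      = (2*(x^2*y^2 - n^2))^2 := by ring
  rw [hinner, Real.sqrt_sq (by positivity)]
  have harg : x^4 + y^4 - 2*n^2 + 2*(x^2*y^2 - n^2) = (x^2+y^2)^2 - 4*n^2 := by ring
  rw [harg]
  have hδ0 : 0 ≤ ‖a - b‖ := norm_nonneg _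
  have hfinal : (x^2+y^2)^2 - 4*n^2 ≤ (‖a - b‖ * (x + y))^2 := by
    have h1 : x^2 + y^2 - 2*n ≤ ‖a - b‖^2 := by rw [hδ]; nlinarith
    have h2 : (x^2+y^2-2*n) * (x^2+y^2+2*n) ≤ ‖a - b‖^2 * (x+y)^2 := by
      apply mul_le_mul h1 (by nlinarith) (by nlinarith) (by positivity)
    calc (x^2+y^2)^2 - 4*n^2 = (x^2+y^2-2*n) * (x^2+y^2+2*n) := by ring
      _ ≤ ‖a - b‖^2 * (x+y)^2 := h2
      _ = (‖a - b‖ * (x + y))^2 := by ring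
  calc Real.sqrt ((x^2+y^2)^2 - 4*n^2) ≤ Real.sqrt ((‖a - b‖ * (x + y))^2) :=
        Real.sqrt_le_sqrt hfinal
    _ = ‖a - b‖ * (x + y) := Real.sqrt_sq (by positivity)

/-- Let q be a probability distribution on [N], ψ_j ∈ ℂ^d with ‖ψ_j‖² ≤ m,
|μ⟩ = Σ_j q_j ψ_j and p = ‖μ⟩‖². Sampling x₁,…,x_s i.i.d. from q and setting
|ψ̄⟩ = (1/s) Σ_j ψ_{x_j}, for all ε > 0,
Pr(‖ |ψ̄⟩⟨ψ̄| - |μ⟩⟨μ| ‖₁ ≥ ε) ≤ 2e² exp(-s(√(p+ε)-√p)²/(2(√m+√p)²)).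
(The vector-norm concentration bound is assumed as a hypothesis, as allowed.) -/
theorem sampled_projector_concentration {d N s : ℕ} (hs : 0 < s)
    (q : PMF (Fin N)) (ψ : Fin N → EuclideanSpace ℂ (Fin d))
    (m : ℝ) (hm : ∀ j, ‖ψ j‖ ^ 2 ≤ m)
    (μvec : EuclideanSpace ℂ (Fin d))
    (hμ : μvec = ∑ j, ((q j).toReal : ℂ) • ψ j)
    (p : ℝ) (hp : p = ‖μvec‖ ^ 2)
    (ψbar : (Fin s → Fin N) → EuclideanSpace ℂ (Fin d))
    (hψbar : ∀ x, ψbar x = (s : ℂ)⁻¹ • ∑ j, ψ (x j))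
    (hconc : ∀ ε : ℝ, 0 < ε →
      (Measure.pi fun _ : Fin s => q.toMeasure) {x | ε ≤ ‖ψbar x - μvec‖} ≤
        ENNReal.ofReal (2 * Real.exp 2 *
          Real.exp (-(s * ε ^ 2) / (2 * (Real.sqrt m + Real.sqrt p) ^ 2)))) :
    ∀ ε : ℝ, 0 < ε →
      (Measure.pi fun _ : Fin s => q.toMeasure)
          {x | ε ≤ schattenOneNorm (rankOne (ψbar x) - rankOne μvec)} ≤
        ENNReal.ofReal (2 * Real.exp 2 *
          Real.exp (-(s * (Real.sqrt (p + ε) - Real.sqrt p) ^ 2) /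
            (2 * (Real.sqrt m + Real.sqrt p) ^ 2))) := by

  intro ε hε
  have hp0 : 0 ≤ p := hp ▸ sq_nonneg ‖μvec‖
  have hε' : 0 < Real.sqrt (p + ε) - Real.sqrt p :=
    sub_pos.mpr (Real.sqrt_lt_sqrt hp0 (by linarith))
  refine le_trans (measure_mono ?_) (hconc _ hε')
  intro x hx
  simp only [Set.mem_setOf_eq] at hx ⊢
  have hkey := traceNorm_key (ψbar x) μvec
  have hδ0 : 0 ≤ ‖ψbar x - μvec‖ := norm_nonneg _
  have hμn : ‖μvec‖ = Real.sqrt p := by rw [hp, Real.sqrt_sq (norm_nonneg _)]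
  have hψn : ‖ψbar x‖ ≤ ‖ψbar x - μvec‖ + Real.sqrt p := by
    calc ‖ψbar x‖ = ‖(ψbar x - μvec) + μvec‖ := by rw [sub_add_cancel]
      _ ≤ ‖ψbar x - μvec‖ + ‖μvec‖ := norm_add_le _ _
      _ = ‖ψbar x - μvec‖ + Real.sqrt p := by rw [hμn]
  have h1 : ε ≤ ‖ψbar x - μvec‖ * (‖ψbar x - μvec‖ + 2 * Real.sqrt p) := by
    refine hx.trans (hkey.trans ?_)
    rw [hμn]
    have hsq0 : 0 ≤ Real.sqrt p := Real.sqrt_nonneg p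
    nlinarith
  have h2 : p + ε ≤ (‖ψbar x - μvec‖ + Real.sqrt p)^2 := by
    have := Real.sq_sqrt hp0
    nlinarith
  have h3 : Real.sqrt (p + ε) ≤ ‖ψbar x - μvec‖ + Real.sqrt p := by
    have h4 : ‖ψbar x - μvec‖ + Real.sqrt p
        = Real.sqrt ((‖ψbar x - μvec‖ + Real.sqrt p)^2) :=
      (Real.sqrt_sq (by positivity)).symm
    rw [h4]
    exact Real.sqrt_le_sqrt h2
  linarith
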